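/- For all integers n > 5 and m > 5, the lexicographic product C_n[C_m] of the cycles of orders n and m has distinguishing index D'(C_n[C_m]) = 2. -/

import Mathlib

open SimpleGraph

/-- The lexicographic product of two simple graphs. -/
def lexProd {V W : Type*} (G : SimpleGraph V) (H : SimpleGraph W) :
    SimpleGraph (V × W) where
  Adj p q := G.Adj p.1 q.1 ∨ (p.1 = q.1 ∧ H.Adj p.2 q.2)
  symm := by
    constructor
    rintro p q (h | ⟨h1, h2⟩)
    · exact Or.inl h.symm
    · exact Or.inr ⟨h1.symm, h2.symm⟩
  loopless := by
    constructor
    rintro p (h | ⟨_, h⟩)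
    · exact h.ne rfl
    · exact h.ne rfl

/-- The distinguishing number: the least `d` such that there is a vertex labeling with `d`
labels preserved only by the identity automorphism. -/
noncomputable def distinguishingNumber {V : Type*} (G : SimpleGraph V) : ℕ :=
  sInf {d : ℕ | ∃ φ : V → Fin d,
    ∀ σ : G ≃g G, (∀ v, φ (σ v) = φ v) → ∀ v, σ v = v}

/-- The distinguishing index: the least `d` such that there is an edge labeling with `d`
labels preserved only by the identity automorphism. -/
noncomputable def distinguishingIndex {V : Type*} (G : SimpleGraph V) : ℕ :=
  sInf {d : ℕ | ∃ ψ : G.edgeSet → Fin d,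
    ∀ σ : G ≃g G, (∀ e, ψ (σ.mapEdgeSet e) = ψ e) → ∀ v, σ v = v}

/-- Every automorphism of `G[H]` is of wreath form, i.e. `Aut(G[H]) = Aut(G)[Aut(H)]`. -/
def wreathForm {V W : Type*} (G : SimpleGraph V) (H : SimpleGraph W) : Prop :=
  ∀ f : lexProd G H ≃g lexProd G H,
    ∃ (α : G ≃g G) (β : V → (H ≃g H)),
      ∀ p : V × W, f p = (α p.1, β (α p.1) p.2)

/-! ### Auxiliary material -/

open Finset
open Fin.CommRing Fin.NatCast

instance lexProd.adjDecidable {V W : Type*} (G : SimpleGraph V) (H : SimpleGraph W)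
    [DecidableRel G.Adj] [DecidableRel H.Adj] [DecidableEq V] :
    DecidableRel (lexProd G H).Adj := fun p q =>
  inferInstanceAs (Decidable (G.Adj p.1 q.1 ∨ (p.1 = q.1 ∧ H.Adj p.2 q.2)))

/-- Abbreviation for the graph in question. -/
abbrev Gnm (n m : ℕ) : SimpleGraph (Fin (n+6) × Fin (m+6)) :=
  lexProd (SimpleGraph.cycleGraph (n+6)) (SimpleGraph.cycleGraph (m+6))

lemma lexProd_adj {n m : ℕ} (p q : Fin (n+6) × Fin (m+6)) :
    (Gnm n m).Adj p q ↔
      ((p.1 - q.1 = 1 ∨ q.1 - p.1 = 1) ∨ (p.1 = q.1 ∧ (p.2 - q.2 = 1 ∨ q.2 - p.2 = 1))) := by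
  show ((cycleGraph (n+6)).Adj _ _ ∨ _) ↔ _
  rw [cycleGraph_adj (n := n+4), cycleGraph_adj (n := m+4)]

lemma fin_val_k {n k : ℕ} (hk : k < n+6) : ((k : Fin (n+6))).val = k := by
  rw [Fin.val_natCast]; exact Nat.mod_eq_of_lt hk

lemma fin_ne {n : ℕ} {j k : ℕ} (hj : j < n+6) (hk : k < n+6) (h : j ≠ k) :
    (j : Fin (n+6)) ≠ (k : Fin (n+6)) := by
  intro he
  have := congrArg Fin.val he
  rw [fin_val_k hj, fin_val_k hk] at this
  exact h this

lemma fin1_ne_zero {n : ℕ} : (1 : Fin (n+6)) ≠ 0 := by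
  have := fin_ne (n := n) (j := 1) (k := 0) (by omega) (by omega) (by omega)
  simpa using this

lemma fin2_ne_zero {n : ℕ} : (2 : Fin (n+6)) ≠ 0 := by
  have := fin_ne (n := n) (j := 2) (k := 0) (by omega) (by omega) (by omega)
  simpa using this

lemma fin4_ne_zero {n : ℕ} : (4 : Fin (n+6)) ≠ 0 := by
  have := fin_ne (n := n) (j := 4) (k := 0) (by omega) (by omega) (by omega)
  simpa using this

/-- common neighbors -/
def cnf {n m : ℕ} (p q : Fin (n+6) × Fin (m+6)) : Finset (Fin (n+6) × Fin (m+6)) :=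
  (Gnm n m).neighborFinset p ∩ (Gnm n m).neighborFinset q

lemma cn_lower {n m : ℕ} (a : Fin (n+6)) (x y : Fin (m+6)) :
    2*(m+6) ≤ (cnf (a,x) (a,y)).card := by
  have hne : a - 1 ≠ a + 1 := by
    intro h
    exact fin2_ne_zero (by linear_combination -h)
  have hsub : (({a-1, a+1} : Finset (Fin (n+6))) ×ˢ (univ : Finset (Fin (m+6)))) ⊆
      cnf (a,x) (a,y) := by
    intro r hr
    rw [mem_product, mem_insert, mem_singleton] at hr
    rw [cnf, mem_inter, mem_neighborFinset, mem_neighborFinset, lexProd_adj, lexProd_adj]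
    rcases hr.1 with h | h
    · constructor <;> exact Or.inl (Or.inl (by rw [h]; ring))
    · constructor <;> exact Or.inl (Or.inr (by rw [h]; ring))
  calc 2*(m+6) = (({a-1, a+1} : Finset (Fin (n+6))) ×ˢ (univ : Finset (Fin (m+6)))).card := by
        rw [card_product, card_insert_of_notMem (by simpa using hne), card_singleton, card_univ,
          Fintype.card_fin]
    _ ≤ _ := card_le_card hsub

lemma cn_upper {n m : ℕ} (a b : Fin (n+6)) (x y : Fin (m+6)) (hab : a ≠ b) :
    (cnf (a,x) (b,y)).card ≤ (m+6) + 4 := by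
  set X : Finset (Fin (n+6)) := ({a-1, a+1} : Finset _) ∩ ({b-1, b+1} : Finset _) with hX
  have hXcard : X.card ≤ 1 := by
    apply Finset.card_le_one.2
    intro c hc d hd
    rw [hX, mem_inter, mem_insert, mem_singleton, mem_insert, mem_singleton] at hc hd
    have key : ∀ e : Fin (n+6), (e = a - 1 ∨ e = a + 1) → (e = b - 1 ∨ e = b + 1) →
        e = a - 1 ∧ a - 1 = b + 1 ∨ e = a + 1 ∧ a + 1 = b - 1 := by
      rintro e (rfl | rfl) (h | h)
      · exact absurd (by linear_combination h) hab
      · exact Or.inl ⟨rfl, h⟩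
      · exact Or.inr ⟨rfl, h⟩
      · exact absurd (by linear_combination h) hab
    rcases key c hc.1 hc.2 with ⟨rfl, h1⟩ | ⟨rfl, h1⟩ <;>
      rcases key d hd.1 hd.2 with ⟨rfl, h2⟩ | ⟨rfl, h2⟩
    · rfl
    · exact absurd (by linear_combination h2 - h1) (fin4_ne_zero (n := n))
    · exact absurd (by linear_combination h1 - h2) (fin4_ne_zero (n := n))
    · rfl
  have hsub : cnf (a,x) (b,y) ⊆ (X ×ˢ (univ : Finset (Fin (m+6)))) ∪
      {(a,x-1),(a,x+1),(b,y-1),(b,y+1)} := by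
    intro r hr
    rw [cnf, mem_inter, mem_neighborFinset, mem_neighborFinset, lexProd_adj, lexProd_adj] at hr
    obtain ⟨h1, h2⟩ := hr
    rw [mem_union, mem_product, mem_insert, mem_insert, mem_insert, mem_singleton]
    rcases h1 with h1 | ⟨he, hv⟩
    · rcases h2 with h2 | ⟨he, hv⟩
      · refine Or.inl ⟨?_, mem_univ _⟩
        rw [hX, mem_inter, mem_insert, mem_singleton, mem_insert, mem_singleton]
        constructor
        · rcases h1 with h | h
          · exact Or.inl (by linear_combination -h)
          · exact Or.inr (by linear_combination h)
        · rcases h2 with h | h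
          · exact Or.inl (by linear_combination -h)
          · exact Or.inr (by linear_combination h)
      · refine Or.inr ?_
        rcases hv with h | h
        · refine Or.inr (Or.inr (Or.inl ?_))
          have hr : r = (r.1, r.2) := rfl
          rw [hr, ← he]
          exact Prod.ext rfl (by linear_combination -h)
        · refine Or.inr (Or.inr (Or.inr ?_))
          have hr : r = (r.1, r.2) := rfl
          rw [hr, ← he]
          exact Prod.ext rfl (by linear_combination h)
    · rcases hv with h | h
      · refine Or.inr (Or.inl ?_)
        have hr : r = (r.1, r.2) := rfl
        rw [hr, ← he]
        exact Prod.ext rfl (by linear_combination -h)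
      · refine Or.inr (Or.inr (Or.inl ?_))
        have hr : r = (r.1, r.2) := rfl
        rw [hr, ← he]
        exact Prod.ext rfl (by linear_combination h)
  refine le_trans (card_le_card hsub) (le_trans (card_union_le _ _) ?_)
  have h1 : (X ×ˢ (univ : Finset (Fin (m+6)))).card ≤ (m+6) := by
    rw [card_product, card_univ, Fintype.card_fin]
    calc X.card * (m+6) ≤ 1 * (m+6) := Nat.mul_le_mul_right _ hXcard
      _ = (m+6) := one_mul _
  have h2 : ({(a,x-1),(a,x+1),(b,y-1),(b,y+1)} : Finset (Fin (n+6) × Fin (m+6))).card ≤ 4 := by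
    apply le_trans (card_insert_le _ _)
    apply Nat.succ_le_succ
    apply le_trans (card_insert_le _ _)
    apply Nat.succ_le_succ
    apply le_trans (card_insert_le _ _)
    apply Nat.succ_le_succ
    exact le_of_eq (card_singleton _)
  omega

lemma cn_iso {n m : ℕ} (σ : Gnm n m ≃g Gnm n m) (p q : Fin (n+6) × Fin (m+6)) :
    (cnf (σ p) (σ q)).card = (cnf p q).card := by
  have himg : (cnf p q).image σ = cnf (σ p) (σ q) := by
    ext r
    simp only [cnf, mem_image, mem_inter, mem_neighborFinset]
    constructor
    · rintro ⟨s, ⟨h1, h2⟩, rfl⟩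
      exact ⟨σ.map_rel_iff.2 h1, σ.map_rel_iff.2 h2⟩
    · rintro ⟨h1, h2⟩
      refine ⟨σ.symm r, ⟨?_, ?_⟩, σ.apply_symm_apply r⟩
      · apply σ.map_rel_iff.1
        rwa [σ.apply_symm_apply]
      · apply σ.map_rel_iff.1
        rwa [σ.apply_symm_apply]
  rw [← himg, card_image_of_injective _ σ.injective]

lemma cycle_rigid {k : ℕ} (f : Fin (k+6) → Fin (k+6))
    (hinj : Function.Injective f)
    (hstep : ∀ x, f (x+1) - f x = 1 ∨ f x - f (x+1) = 1)
    (h0 : f 0 = 0) (h1 : f 1 = 1) : ∀ x, f x = x := by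
  have key : ∀ t : ℕ, f ((t : ℕ) : Fin (k+6)) = ((t : ℕ) : Fin (k+6)) ∧
      f ((t+1 : ℕ) : Fin (k+6)) = ((t+1 : ℕ) : Fin (k+6)) := by
    intro t
    induction t with
    | zero => exact ⟨by simpa using h0, by simpa using h1⟩
    | succ t ih =>
      refine ⟨ih.2, ?_⟩
      have hc : ((t+1 : ℕ) : Fin (k+6)) + 1 = ((t+2 : ℕ) : Fin (k+6)) := by push_cast; ring
      rcases hstep ((t+1 : ℕ) : Fin (k+6)) with h | h
      · rw [ih.2, hc] at h
        have h' : f ((t+2 : ℕ) : Fin (k+6)) = ((t+1 : ℕ) : Fin (k+6)) + 1 := by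
          linear_combination h
        rw [hc] at h'
        exact h'
      · exfalso
        rw [ih.2, hc] at h
        have hft : f ((t+2 : ℕ) : Fin (k+6)) = ((t : ℕ) : Fin (k+6)) := by
          push_cast
          push_cast at h
          linear_combination -h
        have heq := hinj (hft.trans ih.1.symm)
        have h2 : ((t+2 : ℕ) : Fin (k+6)) - ((t : ℕ) : Fin (k+6)) = 0 := by rw [heq]; ring
        apply fin2_ne_zero (n := k)
        calc (2 : Fin (k+6)) = ((t+2 : ℕ) : Fin (k+6)) - ((t : ℕ) : Fin (k+6)) := by
              push_cast; ring
          _ = 0 := h2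
  intro x
  have := (key x.val).1
  rwa [Fin.cast_val_eq_self x] at this

/-- The distinguishing 2-labelling, as a symmetric relation on vertices. -/
def col {n m : ℕ} (p q : Fin (n+6) × Fin (m+6)) : Prop :=
  (p.1 = 0 ∧ q.1 = 0 ∧ ((p.2 = 0 ∧ q.2 = 1) ∨ (p.2 = 1 ∧ q.2 = 0)))
  ∨ (q.1 = p.1 + 1 ∧ p.2 = 0 ∧ q.2 = 0) ∨ (p.1 = q.1 + 1 ∧ p.2 = 0 ∧ q.2 = 0)
  ∨ (q.1 = p.1 + 1 ∧ p.2 = 0 ∧ q.2 = 1) ∨ (p.1 = q.1 + 1 ∧ p.2 = 1 ∧ q.2 = 0)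

lemma col_symm {n m : ℕ} : Symmetric (col (n := n) (m := m)) := by
  intro p q h
  unfold col at h ⊢
  tauto

lemma ite_one_zero_eq_iff {A B : Prop} [Decidable A] [Decidable B]
    (h : (if A then (1 : Fin 2) else 0) = (if B then (1 : Fin 2) else 0)) : A ↔ B := by
  by_cases h1 : A <;> by_cases h2 : B
  · exact iff_of_true h1 h2
  · rw [if_pos h1, if_neg h2] at h; exact absurd h (by decide)
  · rw [if_neg h1, if_pos h2] at h; exact absurd h (by decide)
  · exact iff_of_false h1 h2

theorem stmt10 (n m : ℕ) (hn : 5 < n) (hm : 5 < m) :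
    distinguishingIndex (lexProd (SimpleGraph.cycleGraph n) (SimpleGraph.cycleGraph m)) = 2 := by
  classical
  obtain ⟨n, rfl⟩ : ∃ k, n = k + 6 := ⟨n - 6, by omega⟩
  obtain ⟨m, rfl⟩ : ∃ k, m = k + 6 := ⟨m - 6, by omega⟩
  clear hn hm
  unfold distinguishingIndex
  set S : Set ℕ := {d : ℕ | ∃ ψ : (Gnm n m).edgeSet → Fin d,
    ∀ σ : Gnm n m ≃g Gnm n m, (∀ e, ψ (σ.mapEdgeSet e) = ψ e) → ∀ v, σ v = v} with hS
  -- the basic edge (0,0)-(0,1)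
  have adjC : (Gnm n m).Adj (0, (0 : Fin (m+6))) (0, 1) :=
    (lexProd_adj _ _).2 (Or.inr ⟨rfl, Or.inr (by ring)⟩)
  -- 0 is not in S
  have hS0 : 0 ∉ S := by
    rintro ⟨ψ, -⟩
    exact (ψ ⟨s((0,0),(0,1)), (Gnm n m).mem_edgeSet.2 adjC⟩).elim0
  -- 1 is not in S
  have hS1 : 1 ∉ S := by
    rintro ⟨ψ, hψ⟩
    have hrot : ∀ p q : Fin (n+6) × Fin (m+6),
        (Gnm n m).Adj (p.1, p.2 + 1) (q.1, q.2 + 1) ↔ (Gnm n m).Adj p q := by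
      intro p q
      rw [lexProd_adj, lexProd_adj]
      dsimp only
      rw [add_sub_add_right_eq_sub]
      rw [show q.2 + 1 - (p.2 + 1) = q.2 - p.2 from add_sub_add_right_eq_sub _ _ _]
    let σ : Gnm n m ≃g Gnm n m :=
      { toEquiv := Equiv.prodCongr (Equiv.refl _) (Equiv.addRight 1)
        map_rel_iff' := fun {p q} => hrot p q }
    have := hψ σ (fun e => Subsingleton.elim _ _) (0, 0)
    have h2 : ((0 : Fin (n+6)), (0 : Fin (m+6)) + 1) = (0, 0) := this
    have h3 := congrArg Prod.snd h2
    simp only at h3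
    exact fin1_ne_zero (n := m) (by linear_combination h3)
  -- 2 is in S
  have hS2 : 2 ∈ S := by
    refine ⟨fun e => if (e : Sym2 (Fin (n+6) × Fin (m+6))) ∈ Sym2.fromRel ⟨col_symm⟩
      then 1 else 0, ?_⟩
    intro σ hψ v
    -- color preservation on edges
    have hcol : ∀ p q, (Gnm n m).Adj p q → (col (σ p) (σ q) ↔ col p q) := by
      intro p q h
      have hmap : ((σ.mapEdgeSet ⟨s(p,q), (Gnm n m).mem_edgeSet.2 h⟩ :
          (Gnm n m).edgeSet) : Sym2 (Fin (n+6) × Fin (m+6))) = s(σ p, σ q) := by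
        simp [Iso.mapEdgeSet, Hom.mapEdgeSet]
      have h2 := hψ ⟨s(p,q), (Gnm n m).mem_edgeSet.2 h⟩
      simp only [hmap] at h2
      have h3 := ite_one_zero_eq_iff h2
      rwa [Sym2.fromRel_prop, Sym2.fromRel_prop] at h3
    -- fibers are preserved
    have hfib : ∀ p q : Fin (n+6) × Fin (m+6), ((σ p).1 = (σ q).1 ↔ p.1 = q.1) := by
      intro p q
      by_cases hpq : p = q
      · subst hpq; simp
      have hcount := cn_iso σ p q
      constructor
      · intro h
        by_contra hne
        have hup : (cnf p q).card ≤ (m+6) + 4 := cn_upper p.1 q.1 p.2 q.2 hne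
        have hq : σ q = ((σ p).1, (σ q).2) := Prod.ext h.symm rfl
        have hlow : 2*(m+6) ≤ (cnf (σ p) (σ q)).card := by
          rw [hq]
          exact cn_lower (σ p).1 (σ p).2 (σ q).2
        omega
      · intro h
        by_contra hne
        have hup : (cnf (σ p) (σ q)).card ≤ (m+6) + 4 := by
          have := cn_upper (σ p).1 (σ q).1 (σ p).2 (σ q).2 hne
          exact this
        have hq : q = (p.1, q.2) := Prod.ext h.symm rfl
        have hlow : 2*(m+6) ≤ (cnf p q).card := by
          rw [hq]
          exact cn_lower p.1 p.2 q.2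
        omega
    -- wreath decomposition data
    set α : Fin (n+6) → Fin (n+6) := fun a => (σ (a, 0)).1 with hαdef
    set β : Fin (n+6) → Fin (m+6) → Fin (m+6) := fun a x => (σ (a, x)).2 with hβdef
    have hform : ∀ a x, σ (a, x) = (α a, β a x) := by
      intro a x
      exact Prod.ext ((hfib (a,x) (a,0)).2 rfl) rfl
    have hαinj : Function.Injective α := by
      intro a b h
      have h2 : ((a, (0:Fin (m+6))) : Fin (n+6) × Fin (m+6)).1 =
          ((b, (0:Fin (m+6))) : Fin (n+6) × Fin (m+6)).1 := (hfib _ _).1 h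
      exact h2
    have hβinj : ∀ a, Function.Injective (β a) := by
      intro a x y h
      have hxy : σ (a, x) = σ (a, y) := by rw [hform, hform, h]
      exact congrArg Prod.snd (σ.injective hxy)
    have hαstep : ∀ a, α (a+1) - α a = 1 ∨ α a - α (a+1) = 1 := by
      intro a
      have h1 : (Gnm n m).Adj (a, (0:Fin (m+6))) (a+1, 0) :=
        (lexProd_adj _ _).2 (Or.inl (Or.inr (by ring)))
      have h2 := σ.map_rel_iff.2 h1
      rw [hform, hform, lexProd_adj] at h2
      dsimp only at h2
      rcases h2 with (h | h) | ⟨he, -⟩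
      · exact Or.inr h
      · exact Or.inl h
      · exfalso
        have := hαinj he
        exact fin1_ne_zero (n := n) (by linear_combination -this)
    have hβstep : ∀ a x, β a (x+1) - β a x = 1 ∨ β a x - β a (x+1) = 1 := by
      intro a x
      have h1 : (Gnm n m).Adj (a, x) (a, x+1) :=
        (lexProd_adj _ _).2 (Or.inr ⟨rfl, Or.inr (by ring)⟩)
      have h2 := σ.map_rel_iff.2 h1
      rw [hform, hform, lexProd_adj] at h2
      dsimp only at h2
      rcases h2 with (h | h) | ⟨-, h | h⟩
      · exact absurd h (by intro hh; exact fin1_ne_zero (n := n) (by linear_combination -hh))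
      · exact absurd h (by intro hh; exact fin1_ne_zero (n := n) (by linear_combination -hh))
      · exact Or.inr h
      · exact Or.inl h
    -- colored edges
    have adjB : ∀ a : Fin (n+6), (Gnm n m).Adj (a, (0:Fin (m+6))) (a+1, 0) :=
      fun a => (lexProd_adj _ _).2 (Or.inl (Or.inr (by ring)))
    have adjD : ∀ a : Fin (n+6), (Gnm n m).Adj (a, (0:Fin (m+6))) (a+1, 1) :=
      fun a => (lexProd_adj _ _).2 (Or.inl (Or.inr (by ring)))
    have cC : col ((0:Fin (n+6)), (0:Fin (m+6))) (0, 1) := Or.inl ⟨rfl, rfl, Or.inl ⟨rfl, rfl⟩⟩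
    have cB : ∀ a : Fin (n+6), col (a, (0:Fin (m+6))) (a+1, 0) :=
      fun a => Or.inr (Or.inl ⟨rfl, rfl, rfl⟩)
    have cD : ∀ a : Fin (n+6), col (a, (0:Fin (m+6))) (a+1, 1) :=
      fun a => Or.inr (Or.inr (Or.inr (Or.inl ⟨rfl, rfl, rfl⟩)))
    -- Step 1: the image of the unique colored vertical edge
    have himgC : col (α 0, β 0 0) (α 0, β 0 1) := by
      have h := (hcol _ _ adjC).2 cC
      rwa [hform, hform] at h
    simp only [col] at himgC
    have hstep1 : α 0 = 0 ∧ ((β 0 0 = 0 ∧ β 0 1 = 1) ∨ (β 0 0 = 1 ∧ β 0 1 = 0)) := by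
      rcases himgC with ⟨h1, -, h3⟩ | ⟨h, -⟩ | ⟨h, -⟩ | ⟨h, -⟩ | ⟨h, -⟩
      · exact ⟨h1, h3⟩
      all_goals exact absurd h (by intro hh; exact fin1_ne_zero (n := n) (by linear_combination -hh))
    obtain ⟨hA0, hcase⟩ := hstep1
    -- images of the cross edges out of fiber 0
    have himgB0 : col ((0:Fin (n+6)), β 0 0) (α 1, β 1 0) := by
      have h := (hcol _ _ (adjB 0)).2 (cB 0)
      rw [hform, hform] at h
      rwa [hA0] at h
    simp only [col] at himgB0
    have himgD0 : col ((0:Fin (n+6)), β 0 0) (α 1, β 1 1) := by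
      have h := (hcol _ _ (adjD 0)).2 (cD 0)
      rw [hform, hform] at h
      rwa [hA0] at h
    simp only [col] at himgD0
    -- Step 2: rule out the reflected case in fiber 0
    have hb00' : β 0 0 = 0 ∧ β 0 1 = 1 := by
      rcases hcase with h | ⟨h1, -⟩
      · exact h
      exfalso
      rcases himgB0 with ⟨-, hq1, -⟩ | ⟨-, hp2, -⟩ | ⟨-, hp2, -⟩ | ⟨-, hp2, -⟩ | ⟨-, -, hq2⟩
      · exact fin1_ne_zero (n := n) (hαinj (hq1.trans hA0.symm))
      · exact fin1_ne_zero (n := m) (h1.symm.trans hp2)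
      · exact fin1_ne_zero (n := m) (h1.symm.trans hp2)
      · exact fin1_ne_zero (n := m) (h1.symm.trans hp2)
      · rcases himgD0 with ⟨-, hq1', -⟩ | ⟨-, hp2', -⟩ | ⟨-, hp2', -⟩ | ⟨-, hp2', -⟩ | ⟨-, -, hq2'⟩
        · exact fin1_ne_zero (n := n) (hαinj (hq1'.trans hA0.symm))
        · exact fin1_ne_zero (n := m) (h1.symm.trans hp2')
        · exact fin1_ne_zero (n := m) (h1.symm.trans hp2')
        · exact fin1_ne_zero (n := m) (h1.symm.trans hp2')
        · exact fin1_ne_zero (n := m) (hβinj 1 (hq2'.trans hq2.symm))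
    obtain ⟨hb00, hb01⟩ := hb00'
    rw [hb00] at himgB0 himgD0
    -- Step 3: pin down fiber 1
    have hkey : α 1 = 1 ∧ β 1 0 = 0 ∧ β 1 1 = 1 := by
      rcases himgB0 with ⟨-, hq1, -⟩ | ⟨he, -, hq⟩ | ⟨he, -, hq⟩ | ⟨he, -, hq⟩ | ⟨-, hp, -⟩
      · exact ((fin1_ne_zero (n := n)) (hαinj (hq1.trans hA0.symm))).elim
      · -- B1 : he : α 1 = 0 + 1, hq : β 1 0 = 0
        rcases himgD0 with ⟨-, hq1', -⟩ | ⟨he', -, hq'⟩ | ⟨he', -, hq'⟩ | ⟨he', -, hq'⟩ | ⟨-, hp', -⟩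
        · exact ((fin1_ne_zero (n := n)) (hαinj (hq1'.trans hA0.symm))).elim
        · exact ((fin1_ne_zero (n := m)) (hβinj 1 (hq'.trans hq.symm))).elim
        · exact (fin2_ne_zero (n := n) (by linear_combination -he - he')).elim
        · exact ⟨by linear_combination he, hq, hq'⟩
        · exact ((fin1_ne_zero (n := m)) (by linear_combination -hp')).elim
      · -- B2 : he : 0 = α 1 + 1, hq : β 1 0 = 0
        rcases himgD0 with ⟨-, hq1', -⟩ | ⟨he', -, hq'⟩ | ⟨he', -, hq'⟩ | ⟨he', -, hq'⟩ | ⟨-, hp', -⟩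
        · exact ((fin1_ne_zero (n := n)) (hαinj (hq1'.trans hA0.symm))).elim
        · exact ((fin1_ne_zero (n := m)) (hβinj 1 (hq'.trans hq.symm))).elim
        · exact ((fin1_ne_zero (n := m)) (hβinj 1 (hq'.trans hq.symm))).elim
        · exact (fin2_ne_zero (n := n) (by linear_combination -he - he')).elim
        · exact ((fin1_ne_zero (n := m)) (by linear_combination -hp')).elim
      · -- D1 : he : α 1 = 0 + 1, hq : β 1 0 = 1
        rcases himgD0 with ⟨-, hq1', -⟩ | ⟨he', -, hq'⟩ | ⟨he', -, hq'⟩ | ⟨he', -, hq'⟩ | ⟨-, hp', -⟩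
        · exact ((fin1_ne_zero (n := n)) (hαinj (hq1'.trans hA0.symm))).elim
        · -- the swap case: kill using the next cross edge
          exfalso
          have himgB1 : col (α 1, β 1 0) (α 2, β 2 0) := by
            have h := (hcol _ _ (adjB 1)).2 (cB 1)
            rwa [hform, hform] at h
          rw [show α 1 = 1 from by linear_combination he, hq] at himgB1
          simp only [col] at himgB1
          rcases himgB1 with ⟨h1, -, -⟩ | ⟨-, hp, -⟩ | ⟨-, hp, -⟩ | ⟨-, hp, -⟩ | ⟨he2, -, -⟩
          · exact fin1_ne_zero (n := n) h1
          · exact fin1_ne_zero (n := m) hp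
          · exact fin1_ne_zero (n := m) hp
          · exact fin1_ne_zero (n := m) hp
          · have hα2 : α 2 = α 0 := by rw [hA0]; linear_combination -he2
            exact fin2_ne_zero (n := n) (hαinj hα2)
        · exact (fin2_ne_zero (n := n) (by linear_combination -he - he')).elim
        · exact ((fin1_ne_zero (n := m)) (hβinj 1 (hq'.trans hq.symm))).elim
        · exact ((fin1_ne_zero (n := m)) (by linear_combination -hp')).elim
      · exact ((fin1_ne_zero (n := m)) (by linear_combination -hp)).elim
    obtain ⟨hA1, hb10, hb11⟩ := hkey
    have hαid : ∀ a, α a = a := cycle_rigid α hαinj hαstep hA0 hA1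
    -- Step 4: all β a fix 0
    have hb0 : ∀ a, β a 0 = 0 := by
      intro a
      have h := (hcol _ _ (adjB a)).2 (cB a)
      rw [hform, hform] at h
      simp only [col, hαid] at h
      rcases h with ⟨h1, h2, -⟩ | ⟨-, hp, -⟩ | ⟨he, -, -⟩ | ⟨-, hp, -⟩ | ⟨he, -, -⟩
      · exact (fin1_ne_zero (n := n) (by linear_combination h2 - h1)).elim
      · exact hp
      · exact (fin2_ne_zero (n := n) (by linear_combination -he)).elim
      · exact hp
      · exact (fin2_ne_zero (n := n) (by linear_combination -he)).elim
    -- Step 5: all β a fix 1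
    have hb1' : ∀ a : Fin (n+6), β (a+1) 1 = 1 := by
      intro a
      have h := (hcol _ _ (adjD a)).2 (cD a)
      rw [hform, hform] at h
      simp only [col, hαid] at h
      rcases h with ⟨h1, h2, -⟩ | ⟨-, -, hq⟩ | ⟨he, -, -⟩ | ⟨-, -, hq⟩ | ⟨he, -, -⟩
      · exact (fin1_ne_zero (n := n) (by linear_combination h2 - h1)).elim
      · exact ((fin1_ne_zero (n := m)) (hβinj (a+1) (hq.trans (hb0 (a+1)).symm))).elim
      · exact (fin2_ne_zero (n := n) (by linear_combination -he)).elim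
      · exact hq
      · exact (fin2_ne_zero (n := n) (by linear_combination -he)).elim
    have hb1 : ∀ a, β a 1 = 1 := by
      intro a
      have h := hb1' (a - 1)
      rwa [sub_add_cancel] at h
    have hβid : ∀ a x, β a x = x :=
      fun a => cycle_rigid (β a) (hβinj a) (hβstep a) (hb0 a) (hb1 a)
    obtain ⟨a, x⟩ := v
    rw [hform, hαid, hβid]

  have hle : sInf S ≤ 2 := Nat.sInf_le hS2
  have hmem : sInf S ∈ S := Nat.sInf_mem ⟨2, hS2⟩
  have h0 : sInf S ≠ 0 := fun h => hS0 (h ▸ hmem)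
  have h1 : sInf S ≠ 1 := fun h => hS1 (h ▸ hmem)
  omega
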